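/- Let c be a positive real, Δ ∈ (0,1), T a real with T > 1, and set α = √(2·ln T). If Δ·√c = α, then for every real x ≥ 1: Δ·x/(c+x) + √(2·ln T/(c+x)) > √(2·ln T/c). -/

import Mathlib

theorem stmt_7 (c Δ T : ℝ) (hc : 0 < c) (hΔ0 : 0 < Δ) (hΔ1 : Δ < 1) (hT : 1 < T)
    (heq : Δ * Real.sqrt c = Real.sqrt (2 * Real.log T)) :
    ∀ x : ℝ, 1 ≤ x →
      Δ * x / (c + x) + Real.sqrt (2 * Real.log T / (c + x)) >
        Real.sqrt (2 * Real.log T / c) := by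
  intro x hx
  have hlog : 0 ≤ 2 * Real.log T := by
    have := Real.log_pos hT; linarith
  have hkey : 2 * Real.log T = Δ ^ 2 * c := by
    rw [← Real.sq_sqrt hlog, ← heq, mul_pow, Real.sq_sqrt hc.le]
  have hs : 0 < c + x := by linarith
  have h1 : Real.sqrt (2 * Real.log T / c) = Δ := by
    rw [hkey, mul_div_assoc, div_self hc.ne', mul_one, Real.sqrt_sq hΔ0.le]
  have h2 : Real.sqrt (2 * Real.log T / (c + x)) = Δ * Real.sqrt (c / (c + x)) := by
    rw [hkey, mul_div_assoc, Real.sqrt_mul (by positivity), Real.sqrt_sq hΔ0.le]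
  rw [h1, h2]
  set t := c / (c + x) with ht
  have ht0 : 0 < t := by positivity
  have ht1 : t < 1 := by
    rw [ht, div_lt_one hs]; linarith
  have hst : t < Real.sqrt t := (Real.lt_sqrt ht0.le).mpr (by nlinarith)
  have hxs : Δ * x / (c + x) = Δ * (1 - t) := by
    field_simp [ht]
    rw [ht]; field_simp <;> ring
  rw [hxs]
  nlinarith [hst]
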